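/- Let Z1, Z2 be independent identically distributed random variables with values in [0,1]. For ρ ≥ 0, E[g(ρ,Z1)]·E[g(ρ,Z2)] ≥ E[g(ρ, Z1·Z2)]·E[h(ρ, Z1, Z2)], i.e., E0(ρ, W⁻) + E0(ρ, W⁺) ≥ 2·E0(ρ, W) after taking -log. (Submartingale property of Gallager's E0 under polarization, expressed via the g and h functionals.) -/

import Mathlib

open Real MeasureTheory

noncomputable def g (ρ z : ℝ) : ℝ :=
  ((1/2) * (1 + z) ^ (1/(1+ρ)) + (1/2) * (1 - z) ^ (1/(1+ρ))) ^ (1+ρ)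

noncomputable def h (ρ z1 z2 : ℝ) : ℝ :=
  (1/2) * (1 + z1 * z2) * g ρ ((z1 + z2)/(1 + z1 * z2))
    + (1/2) * (1 - z1 * z2) * g ρ (|z1 - z2|/(1 - z1 * z2))

noncomputable def Mm (ρ p q : ℝ) : ℝ :=
  ((1/2) * p ^ (1/(1+ρ)) + (1/2) * q ^ (1/(1+ρ))) ^ (1+ρ)

lemma g_eq_Mm (ρ z : ℝ) : g ρ z = Mm ρ (1+z) (1-z) := rfl

lemma Mm_symm (ρ p q : ℝ) : Mm ρ p q = Mm ρ q p := by rw [Mm, Mm, add_comm]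

section basic
variable {ρ : ℝ} (hρ : 0 ≤ ρ)
include hρ

lemma one_add_pos : (0:ℝ) < 1 + ρ := by linarith

lemma alpha_pos : 0 < 1/(1+ρ) := by positivity

lemma alpha_le_one : 1/(1+ρ) ≤ 1 := by
  rw [div_le_one (one_add_pos hρ)]; linarith

lemma Mm_nonneg {p q : ℝ} (hp : 0 ≤ p) (hq : 0 ≤ q) : 0 ≤ Mm ρ p q := by
  have : 0 ≤ (1/2) * p ^ (1/(1+ρ)) + (1/2) * q ^ (1/(1+ρ)) := by
    have := Real.rpow_nonneg hp (1/(1+ρ)); have := Real.rpow_nonneg hq (1/(1+ρ)); linarith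
  exact Real.rpow_nonneg this _

lemma inner_nonneg {p q : ℝ} (hp : 0 ≤ p) (hq : 0 ≤ q) :
    0 ≤ (1/2) * p ^ (1/(1+ρ)) + (1/2) * q ^ (1/(1+ρ)) := by
  have := Real.rpow_nonneg hp (1/(1+ρ)); have := Real.rpow_nonneg hq (1/(1+ρ)); linarith

lemma Mm_rpow_alpha {p q : ℝ} (hp : 0 ≤ p) (hq : 0 ≤ q) :
    (Mm ρ p q) ^ (1/(1+ρ)) = (1/2) * p ^ (1/(1+ρ)) + (1/2) * q ^ (1/(1+ρ)) := by
  rw [Mm, ← Real.rpow_mul (inner_nonneg hρ hp hq),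
    mul_one_div_cancel (one_add_pos hρ).ne', Real.rpow_one]

lemma Mm_mono {p q p' q' : ℝ} (hp : 0 ≤ p) (hq : 0 ≤ q) (hp' : p ≤ p') (hq' : q ≤ q') :
    Mm ρ p q ≤ Mm ρ p' q' := by
  apply Real.rpow_le_rpow (inner_nonneg hρ hp hq)
  · have h1 := Real.rpow_le_rpow hp hp' (alpha_pos hρ).le
    have h2 := Real.rpow_le_rpow hq hq' (alpha_pos hρ).le
    linarith
  · linarith

lemma Mm_homog {t p q : ℝ} (ht : 0 ≤ t) (hp : 0 ≤ p) (hq : 0 ≤ q) :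
    Mm ρ (t*p) (t*q) = t * Mm ρ p q := by
  rw [Mm, Mm, Real.mul_rpow ht hp, Real.mul_rpow ht hq]
  have e1 : (1:ℝ)/2 * (t ^ (1/(1+ρ)) * p ^ (1/(1+ρ))) + 1/2 * (t ^ (1/(1+ρ)) * q ^ (1/(1+ρ)))
      = t ^ (1/(1+ρ)) * ((1/2) * p ^ (1/(1+ρ)) + (1/2) * q ^ (1/(1+ρ))) := by ring
  rw [e1, Real.mul_rpow (Real.rpow_nonneg ht _) (inner_nonneg hρ hp hq),
    ← Real.rpow_mul ht, one_div_mul_cancel (one_add_pos hρ).ne', Real.rpow_one]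

end basic
section analytic
variable {ρ : ℝ} (hρ : 0 ≤ ρ)
include hρ

omit hρ in
lemma two_point_concave {p u v a b : ℝ} (hp0 : 0 ≤ p) (hp1 : p ≤ 1)
    (hu : 0 ≤ u) (hv : 0 ≤ v) (ha : 0 ≤ a) (hb : 0 ≤ b) (hab : a + b = 1) :
    a * u ^ p + b * v ^ p ≤ (a*u + b*v) ^ p := by
  have := (Real.concaveOn_rpow hp0 hp1).2 (Set.mem_Ici.2 hu) (Set.mem_Ici.2 hv) ha hb hab
  simpa [smul_eq_mul] using this

/-- The inner sum `(1+x)^α + (1-x)^α` is antitone on `[0,1]`. -/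
lemma G_anti {x y : ℝ} (hy : 0 ≤ y) (hxy : y ≤ x) (hx : x ≤ 1) :
    (1+x) ^ (1/(1+ρ)) + (1-x) ^ (1/(1+ρ)) ≤ (1+y) ^ (1/(1+ρ)) + (1-y) ^ (1/(1+ρ)) := by
  rcases eq_or_lt_of_le (hy.trans hxy) with hx0 | hx0
  · have : y = 0 := le_antisymm (by linarith) hy
    rw [this, ← hx0]
  · set α := 1/(1+ρ) with hαdef
    have hα0 : 0 ≤ α := (alpha_pos hρ).le
    have hα1 : α ≤ 1 := alpha_le_one hρ
    set l := (x+y)/(2*x) with hl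
    have hx0' : (0:ℝ) < 2*x := by linarith
    have hl0 : 0 ≤ l := by positivity
    have hl1' : l ≤ 1 := by rw [hl, div_le_one hx0']; linarith
    have hab : l + (1-l) = 1 := by ring
    have c1 := two_point_concave hα0 hα1 (by linarith : (0:ℝ) ≤ 1+x)
      (by linarith : (0:ℝ) ≤ 1-x) hl0 (by linarith) hab
    have c2 := two_point_concave hα0 hα1 (by linarith : (0:ℝ) ≤ 1-x)
      (by linarith : (0:ℝ) ≤ 1+x) hl0 (by linarith) hab
    have h1 : l * (1+x) + (1-l) * (1-x) = 1 + y := by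
      rw [hl]; field_simp; ring
    have h2 : l * (1-x) + (1-l) * (1+x) = 1 - y := by
      rw [hl]; field_simp; ring
    rw [h1] at c1; rw [h2] at c2
    calc (1+x) ^ α + (1-x) ^ α
        = (l * (1+x) ^ α + (1-l) * (1-x) ^ α) + (l * (1-x) ^ α + (1-l) * (1+x) ^ α) := by ring
      _ ≤ (1+y) ^ α + (1-y) ^ α := add_le_add c1 c2

lemma g_nonneg {z : ℝ} (hz1 : -1 ≤ z) (hz2 : z ≤ 1) : 0 ≤ g ρ z :=
  Mm_nonneg hρ (by linarith) (by linarith)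

lemma g_anti {x y : ℝ} (hy : 0 ≤ y) (hxy : y ≤ x) (hx : x ≤ 1) : g ρ x ≤ g ρ y := by
  apply Real.rpow_le_rpow (inner_nonneg hρ (by linarith : (0:ℝ) ≤ 1+x) (by linarith))
  · have := G_anti hρ hy hxy hx; linarith
  · linarith

lemma g_zero : g ρ 0 = 1 := by
  rw [g]
  norm_num

lemma g_le_one {z : ℝ} (hz0 : 0 ≤ z) (hz1 : z ≤ 1) : g ρ z ≤ 1 := by
  rw [← g_zero hρ]; exact g_anti hρ le_rfl hz0 hz1

/-- Key monotonicity: `g ρ z / (1 - z^2)` is nondecreasing. -/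
lemma g_ratio_mono {x y : ℝ} (hy : 0 ≤ y) (hxy : y ≤ x) (hx : x < 1) :
    g ρ y * (1 - x^2) ≤ g ρ x * (1 - y^2) := by
  set α := 1/(1+ρ) with hαdef
  have hα0 : 0 < α := alpha_pos hρ
  have hα1 : α ≤ 1 := alpha_le_one hρ
  -- reduce to α-power comparison
  have hgx : 0 ≤ g ρ x := g_nonneg hρ (by linarith) (by linarith)
  have hgy : 0 ≤ g ρ y := g_nonneg hρ (by linarith) (by linarith)
  have h1x : (0:ℝ) ≤ 1 - x^2 := by nlinarith
  have h1y : (0:ℝ) ≤ 1 - y^2 := by nlinarith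
  rw [← Real.rpow_le_rpow_iff (by positivity) (by positivity) hα0,
    Real.mul_rpow hgy h1x, Real.mul_rpow hgx h1y]
  have e1x : (1:ℝ) - x^2 = (1+x)*(1-x) := by ring
  have e1y : (1:ℝ) - y^2 = (1+y)*(1-y) := by ring
  rw [e1x, e1y, Real.mul_rpow (by linarith) (by linarith),
    Real.mul_rpow (by linarith) (by linarith),
    g_eq_Mm, g_eq_Mm, Mm_rpow_alpha hρ (by linarith) (by linarith),
    Mm_rpow_alpha hρ (by linarith) (by linarith)]
  set Ax := (1+x) ^ α with hAx
  set Bx := (1-x) ^ α with hBx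
  set Ay := (1+y) ^ α with hAy
  set By := (1-y) ^ α with hBy
  have hBx0 : 0 ≤ Bx := Real.rpow_nonneg (by linarith) _
  have hBy0 : 0 ≤ By := Real.rpow_nonneg (by linarith) _
  have hAx1 : 1 ≤ Ax := by
    have := Real.rpow_le_rpow zero_le_one (by linarith : (1:ℝ) ≤ 1+x) hα0.le
    rwa [Real.one_rpow] at this
  have hAy1 : 1 ≤ Ay := by
    have := Real.rpow_le_rpow zero_le_one (by linarith : (1:ℝ) ≤ 1+y) hα0.le
    rwa [Real.one_rpow] at this
  have hBx1 : Bx ≤ 1 := by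
    have := Real.rpow_le_rpow (by linarith : (0:ℝ) ≤ 1-x) (by linarith : 1-x ≤ 1) hα0.le
    rwa [Real.one_rpow] at this
  have hBy1 : By ≤ 1 := by
    have := Real.rpow_le_rpow (by linarith : (0:ℝ) ≤ 1-y) (by linarith : 1-y ≤ 1) hα0.le
    rwa [Real.one_rpow] at this
  have hG := G_anti hρ hy hxy hx.le
  rw [← hαdef, ← hAx, ← hBx, ← hAy, ← hBy] at hG
  -- goal: (½Ay + ½By) * (Ax * Bx) ≤ (½Ax + ½Bx) * (Ay * By)
  have hD1 : Ax - Ay ≤ By - Bx := by linarith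
  have hD2 : 0 ≤ Ax - Ay := by
    have := Real.rpow_le_rpow (by linarith : (0:ℝ) ≤ 1+y) (by linarith : 1+y ≤ 1+x) hα0.le
    rw [← hAx, ← hAy] at this; linarith
  nlinarith [mul_le_mul hAx1 hAy1 zero_le_one (by linarith : (0:ℝ) ≤ Ax),
    mul_le_mul hBx1 hBy1 hBy0 zero_le_one,
    mul_nonneg hBx0 hBy0,
    mul_le_mul_of_nonneg_left hD1 (mul_nonneg hBx0 hBy0),
    mul_le_mul_of_nonneg_right (mul_le_mul hBx1 hBy1 hBy0 zero_le_one) hD2,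
    mul_le_mul_of_nonneg_right (mul_le_mul hAx1 hAy1 zero_le_one (by linarith : (0:ℝ) ≤ Ax)) (by linarith : 0 ≤ By - Bx)]

end analytic
section analytic2
variable {ρ : ℝ} (hρ : 0 ≤ ρ)
include hρ

/-- Reverse Minkowski / superadditivity of `Mm`. -/
lemma Mm_superadd {P1 Q1 P2 Q2 : ℝ} (hP1 : 0 ≤ P1) (hQ1 : 0 ≤ Q1)
    (hP2 : 0 ≤ P2) (hQ2 : 0 ≤ Q2) :
    Mm ρ P1 Q1 + Mm ρ P2 Q2 ≤ Mm ρ (P1+P2) (Q1+Q2) := by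
  set α := 1/(1+ρ) with hαdef
  have hα0 : 0 < α := alpha_pos hρ
  have hα1 : α ≤ 1 := alpha_le_one hρ
  set s := Mm ρ P1 Q1 with hs
  set t := Mm ρ P2 Q2 with ht
  have hs0 : 0 ≤ s := Mm_nonneg hρ hP1 hQ1
  have ht0 : 0 ≤ t := Mm_nonneg hρ hP2 hQ2
  rcases eq_or_lt_of_le hs0 with hsz | hsp
  · rw [← hsz, zero_add]
    exact Mm_mono hρ hP2 hQ2 (by linarith) (by linarith)
  rcases eq_or_lt_of_le ht0 with htz | htp
  · rw [← htz, add_zero]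
    exact Mm_mono hρ hP1 hQ1 (by linarith) (by linarith)
  have hst : 0 < s + t := by linarith
  set l := s/(s+t) with hl
  have hl0 : 0 ≤ l := by positivity
  have hl1 : l + (1 - l) = 1 := by ring
  have hl1' : 1 - l = t/(s+t) := by rw [hl]; field_simp; ring
  have hl1'' : 0 ≤ 1 - l := by rw [hl1']; positivity
  -- the four scaled points
  have key : ∀ P Q : ℝ, 0 ≤ P → 0 ≤ Q →
      l * (P*((s+t)/s)) + (1-l) * (Q*((s+t)/t)) = P + Q := by
    intro P Q _ _
    rw [hl, hl1']
    field_simp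
  have c1 := two_point_concave hα0.le hα1 (by positivity : (0:ℝ) ≤ P1*((s+t)/s))
    (by positivity : (0:ℝ) ≤ P2*((s+t)/t)) hl0 hl1'' hl1
  have c2 := two_point_concave hα0.le hα1 (by positivity : (0:ℝ) ≤ Q1*((s+t)/s))
    (by positivity : (0:ℝ) ≤ Q2*((s+t)/t)) hl0 hl1'' hl1
  rw [key P1 P2 hP1 hP2] at c1
  rw [key Q1 Q2 hQ1 hQ2] at c2
  -- rewrite the scaled powers
  have hfrac_s : (0:ℝ) ≤ (s+t)/s := by positivity
  have hfrac_t : (0:ℝ) ≤ (s+t)/t := by positivity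
  have epow : ∀ P c : ℝ, 0 ≤ P → 0 ≤ c → (P*c) ^ α = P ^ α * c ^ α := by
    intro P c hP hc; exact Real.mul_rpow hP hc
  rw [epow P1 _ hP1 hfrac_s, epow P2 _ hP2 hfrac_t] at c1
  rw [epow Q1 _ hQ1 hfrac_s, epow Q2 _ hQ2 hfrac_t] at c2
  -- combine
  have hcomb : l * ((s+t)/s) ^ α * (1/2 * P1 ^ α + 1/2 * Q1 ^ α)
      + (1-l) * ((s+t)/t) ^ α * (1/2 * P2 ^ α + 1/2 * Q2 ^ α)
      ≤ 1/2 * (P1+P2) ^ α + 1/2 * (Q1+Q2) ^ α := by nlinarith [c1, c2]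
  have hsα : 1/2 * P1 ^ α + 1/2 * Q1 ^ α = s ^ α := (Mm_rpow_alpha hρ hP1 hQ1).symm
  have htα : 1/2 * P2 ^ α + 1/2 * Q2 ^ α = t ^ α := (Mm_rpow_alpha hρ hP2 hQ2).symm
  rw [hsα, htα] at hcomb
  have e1 : ((s+t)/s) ^ α * s ^ α = (s+t) ^ α := by
    rw [← Real.mul_rpow hfrac_s hs0, div_mul_cancel₀ _ (ne_of_gt hsp)]
  have e2 : ((s+t)/t) ^ α * t ^ α = (s+t) ^ α := by
    rw [← Real.mul_rpow hfrac_t ht0, div_mul_cancel₀ _ (ne_of_gt htp)]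
  have hcomb2 : (s+t) ^ α ≤ 1/2 * (P1+P2) ^ α + 1/2 * (Q1+Q2) ^ α := by
    have : l * (((s+t)/s) ^ α * s ^ α) + (1-l) * (((s+t)/t) ^ α * t ^ α)
        = (s+t) ^ α := by rw [e1, e2]; ring
    nlinarith [hcomb]
  have final : ((s+t) ^ α) ^ (1+ρ) ≤ Mm ρ (P1+P2) (Q1+Q2) := by
    rw [Mm]
    exact Real.rpow_le_rpow (Real.rpow_nonneg hst.le _) hcomb2 (one_add_pos hρ).le
  rwa [← Real.rpow_mul hst.le, hαdef, one_div_mul_cancel (one_add_pos hρ).ne',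
    Real.rpow_one] at final

end analytic2
section analytic3
variable {ρ : ℝ} (hρ : 0 ≤ ρ)
include hρ

/-- Representation: `Mm p q = ((p+q)/2) * g(|p-q|/(p+q))`. -/
lemma Mm_rep {p q : ℝ} (hp : 0 ≤ p) (hq : 0 ≤ q) (hpq : 0 < p + q) :
    Mm ρ p q = ((p+q)/2) * g ρ (|p-q|/(p+q)) := by
  set w := |p-q|/(p+q) with hw
  have hw0 : 0 ≤ w := by positivity
  have hw1 : w ≤ 1 := by
    rw [hw, div_le_one hpq, abs_le]; constructor <;> linarith
  rw [g_eq_Mm, ← Mm_homog hρ (by positivity : (0:ℝ) ≤ (p+q)/2) (by linarith) (by linarith)]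
  rcases le_total q p with hqp | hqp
  · have habs : |p-q| = p - q := abs_of_nonneg (by linarith)
    have e1 : (p+q)/2 * (1+w) = p := by
      rw [hw, habs]; field_simp; ring
    have e2 : (p+q)/2 * (1-w) = q := by
      rw [hw, habs]; field_simp; ring
    rw [e1, e2]
  · have habs : |p-q| = q - p := by
      rw [abs_sub_comm]; exact abs_of_nonneg (by linarith)
    have e1 : (p+q)/2 * (1+w) = q := by
      rw [hw, habs]; field_simp; ring
    have e2 : (p+q)/2 * (1-w) = p := by
      rw [hw, habs]; field_simp; ring
    rw [e1, e2, Mm_symm]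

/-- Product identity. -/
lemma g_mul_g {z1 z2 : ℝ} (h1 : z1 ∈ Set.Icc (-1:ℝ) 1) (h2 : z2 ∈ Set.Icc (-1:ℝ) 1) :
    g ρ z1 * g ρ z2
      = Mm ρ (Mm ρ ((1+z1)*(1+z2)) ((1-z1)*(1-z2))) (Mm ρ ((1+z1)*(1-z2)) ((1-z1)*(1+z2))) := by
  obtain ⟨h1a, h1b⟩ := h1; obtain ⟨h2a, h2b⟩ := h2
  have ha : (0:ℝ) ≤ 1+z1 := by linarith
  have hb : (0:ℝ) ≤ 1-z1 := by linarith
  have hc : (0:ℝ) ≤ 1+z2 := by linarith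
  have hd : (0:ℝ) ≤ 1-z2 := by linarith
  rw [g_eq_Mm, g_eq_Mm, Mm, Mm, Mm,
    ← Real.mul_rpow (inner_nonneg hρ ha hb) (inner_nonneg hρ hc hd),
    Mm_rpow_alpha hρ (by positivity) (by positivity),
    Mm_rpow_alpha hρ (by positivity) (by positivity),
    Real.mul_rpow ha hc, Real.mul_rpow ha hd, Real.mul_rpow hb hc, Real.mul_rpow hb hd]
  congr 1
  ring

/-- `h` in product form. -/
lemma h_eq {z1 z2 : ℝ} (h1 : z1 ∈ Set.Icc (0:ℝ) 1) (h2 : z2 ∈ Set.Icc (0:ℝ) 1) :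
    h ρ z1 z2 = (1/2) * Mm ρ ((1+z1)*(1+z2)) ((1-z1)*(1-z2))
      + (1/2) * Mm ρ ((1+z1)*(1-z2)) ((1-z1)*(1+z2)) := by
  obtain ⟨h1a, h1b⟩ := h1; obtain ⟨h2a, h2b⟩ := h2
  have hu0 : 0 ≤ z1*z2 := mul_nonneg h1a h2a
  have hu1 : z1*z2 ≤ 1 := by nlinarith
  have hA : (0:ℝ) < 1 + z1*z2 := by linarith
  -- first term
  have hv0 : 0 ≤ (z1+z2)/(1+z1*z2) := by positivity
  have hv1 : (z1+z2)/(1+z1*z2) ≤ 1 := by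
    rw [div_le_one hA]; nlinarith
  have t1 : (1/2) * (1 + z1*z2) * g ρ ((z1+z2)/(1+z1*z2))
      = (1/2) * Mm ρ ((1+z1)*(1+z2)) ((1-z1)*(1-z2)) := by
    rw [g_eq_Mm, mul_assoc, ← Mm_homog hρ hA.le (by linarith) (by linarith)]
    have e1 : (1+z1*z2) * (1 + (z1+z2)/(1+z1*z2)) = (1+z1)*(1+z2) := by
      field_simp; ring
    have e2 : (1+z1*z2) * (1 - (z1+z2)/(1+z1*z2)) = (1-z1)*(1-z2) := by
      field_simp; ring
    rw [e1, e2]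
  rw [h, t1]
  congr 1
  -- second term
  rcases eq_or_lt_of_le hu1 with hu1' | hu1'
  · -- z1 = z2 = 1
    have hz2 : z2 = 1 := by nlinarith
    have hz1 : z1 = 1 := by nlinarith
    rw [hz1, hz2]
    have hne : ((1+ρ)⁻¹:ℝ) ≠ 0 := by
      have := one_add_pos hρ; positivity
    norm_num [Mm]
    rw [Real.zero_rpow hne]
    norm_num [Real.zero_rpow (one_add_pos hρ).ne']
  · have hB : (0:ℝ) < 1 - z1*z2 := by linarith
    have hw0 : 0 ≤ |z1-z2|/(1-z1*z2) := by positivity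
    have hw1 : |z1-z2|/(1-z1*z2) ≤ 1 := by
      rw [div_le_one hB, abs_le]; constructor <;> nlinarith
    rw [g_eq_Mm, mul_assoc, ← Mm_homog hρ hB.le (by linarith) (by linarith)]
    rcases le_total z2 z1 with hz | hz
    · have habs : |z1-z2| = z1 - z2 := abs_of_nonneg (by linarith)
      have e1 : (1-z1*z2) * (1 + |z1-z2|/(1-z1*z2)) = (1+z1)*(1-z2) := by
        rw [habs]; field_simp; ring
      have e2 : (1-z1*z2) * (1 - |z1-z2|/(1-z1*z2)) = (1-z1)*(1+z2) := by
        rw [habs]; field_simp; ring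
      rw [e1, e2]
    · have habs : |z1-z2| = z2 - z1 := by
        rw [abs_sub_comm]; exact abs_of_nonneg (by linarith)
      have e1 : (1-z1*z2) * (1 + |z1-z2|/(1-z1*z2)) = (1-z1)*(1+z2) := by
        rw [habs]; field_simp; ring
      have e2 : (1-z1*z2) * (1 - |z1-z2|/(1-z1*z2)) = (1+z1)*(1-z2) := by
        rw [habs]; field_simp; ring
      rw [e1, e2, Mm_symm]

end analytic3
section pointwise

lemma arith_mul_le_one {z1 z2 : ℝ} (h1a : 0 ≤ z1) (h1b : z1 ≤ 1) (h2a : 0 ≤ z2)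
    (h2b : z2 ≤ 1) : z1*z2 ≤ 1 := by nlinarith

lemma arith_sum_le {z1 z2 : ℝ} (h1a : 0 ≤ z1) (h1b : z1 ≤ 1) (h2a : 0 ≤ z2)
    (h2b : z2 ≤ 1) : z1 + z2 ≤ 1 + z1*z2 := by nlinarith

lemma arith_abs_le {z1 z2 : ℝ} (h1a : 0 ≤ z1) (h1b : z1 ≤ 1) (h2a : 0 ≤ z2)
    (h2b : z2 ≤ 1) : |z1 - z2| ≤ 1 - z1*z2 := by
  rw [abs_le]; constructor <;> nlinarith

lemma arith_cross {z1 z2 : ℝ} (h1a : 0 ≤ z1) (h1b : z1 ≤ 1) (h2a : 0 ≤ z2)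
    (h2b : z2 ≤ 1) : |z1 - z2| * (1 + z1*z2) ≤ (z1 + z2) * (1 - z1*z2) := by
  rcases le_total z2 z1 with hz | hz
  · rw [abs_of_nonneg (by linarith : (0:ℝ) ≤ z1 - z2)]
    nlinarith [mul_nonneg (mul_nonneg h2a (by linarith : (0:ℝ) ≤ 1 - z1))
      (by linarith : (0:ℝ) ≤ 1 + z1)]
  · rw [abs_of_nonpos (by linarith : z1 - z2 ≤ 0)]
    nlinarith [mul_nonneg (mul_nonneg h1a (by linarith : (0:ℝ) ≤ 1 - z2))
      (by linarith : (0:ℝ) ≤ 1 + z2)]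

lemma arith_branch1 {u gx gy : ℝ} (hC : (1-u)^2*gy ≤ (1+u)^2*gx) :
    -(u*((1+u)*gx + (1-u)*gy)) ≤ (1+u)*gx - (1-u)*gy := by nlinarith

lemma arith_branch2 {u gx gy : ℝ} (h : (1-u)*(1+u)*gx ≤ (1-u)*(1+u)*gy) :
    (1+u)*gx - (1-u)*gy ≤ u*((1+u)*gx + (1-u)*gy) := by nlinarith

lemma arith_sq_le_sq {u : ℝ} (hu0 : 0 ≤ u) : (1-u)^2 ≤ (1+u)^2 := by nlinarith

lemma arith_one_sub_sq {x : ℝ} (h0 : 0 ≤ x) (h1 : x < 1) : 0 < 1 - x^2 := by nlinarith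

lemma arith_PQ_sum {z1 z2 : ℝ} (h1a : 0 ≤ z1) (h2a : 0 ≤ z2) :
    0 < (1+z1)*(1+z2) + (1-z1)*(1-z2) := by nlinarith

lemma arith_one_le_P {z1 z2 : ℝ} (h1a : 0 ≤ z1) (h2a : 0 ≤ z2) :
    1 ≤ (1+z1)*(1+z2) := by nlinarith

variable {ρ : ℝ} (hρ : 0 ≤ ρ)
include hρ

lemma Mm_one_zero_pos : 0 < Mm ρ 1 0 := by
  rw [Mm, Real.one_rpow, Real.zero_rpow (alpha_pos hρ).ne']
  norm_num
  positivity

lemma pointwise_main {z1 z2 : ℝ} (h1 : z1 ∈ Set.Icc (0:ℝ) 1) (h2 : z2 ∈ Set.Icc (0:ℝ) 1) :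
    g ρ (z1*z2) * h ρ z1 z2 ≤ g ρ z1 * g ρ z2 := by
  obtain ⟨h1a, h1b⟩ := h1; obtain ⟨h2a, h2b⟩ := h2
  have ha : (0:ℝ) ≤ 1+z1 := by linarith
  have hb : (0:ℝ) ≤ 1-z1 := by linarith
  have hc : (0:ℝ) ≤ 1+z2 := by linarith
  have hd : (0:ℝ) ≤ 1-z2 := by linarith
  set u := z1*z2 with hu
  set P := (1+z1)*(1+z2) with hP
  set Q := (1-z1)*(1-z2) with hQ
  set R := (1+z1)*(1-z2) with hR
  set S := (1-z1)*(1+z2) with hS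
  set X := Mm ρ P Q with hX
  set Y := Mm ρ R S with hY
  clear_value u P Q R S X Y
  have hu0 : 0 ≤ u := by rw [hu]; exact mul_nonneg h1a h2a
  have hu1 : u ≤ 1 := by rw [hu]; exact arith_mul_le_one h1a h1b h2a h2b
  have hA : (0:ℝ) < 1+u := by linarith
  have hP0 : 0 ≤ P := by rw [hP]; exact mul_nonneg ha hc
  have hQ0 : 0 ≤ Q := by rw [hQ]; exact mul_nonneg hb hd
  have hR0 : 0 ≤ R := by rw [hR]; exact mul_nonneg ha hd
  have hS0 : 0 ≤ S := by rw [hS]; exact mul_nonneg hb hc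
  have hX0 : 0 ≤ X := by rw [hX]; exact Mm_nonneg hρ hP0 hQ0
  have hY0 : 0 ≤ Y := by rw [hY]; exact Mm_nonneg hρ hR0 hS0
  have hXpos : 0 < X := by
    rw [hX]
    refine lt_of_lt_of_le (Mm_one_zero_pos hρ) ?_
    refine Mm_mono hρ zero_le_one le_rfl ?_ hQ0
    rw [hP]
    exact arith_one_le_P h1a h2a
  have hSum : 0 < X + Y := by linarith
  -- the key bound |X - Y| ≤ u * (X + Y)
  have key : |X - Y| ≤ u * (X+Y) := by
    rcases eq_or_lt_of_le hu1 with hu1' | hu1'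
    · rw [hu1', one_mul, abs_le]; constructor <;> linarith
    · have hB : (0:ℝ) < 1-u := by linarith
      set x := (z1+z2)/(1+u) with hx
      set y := |z1-z2|/(1-u) with hy
      clear_value x y
      have hx0 : 0 ≤ x := by rw [hx]; positivity
      have hy0 : 0 ≤ y := by rw [hy]; positivity
      have hx1 : x ≤ 1 := by
        rw [hx, div_le_one hA, hu]
        exact arith_sum_le h1a h1b h2a h2b
      have hy1 : y ≤ 1 := by
        rw [hy, div_le_one hB, hu]
        exact arith_abs_le h1a h1b h2a h2b
      have hyx : y ≤ x := by
        rw [hx, hy, div_le_div_iff₀ hB hA, hu]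
        exact arith_cross h1a h1b h2a h2b
      have hx' : x*(1+u) = z1+z2 := by rw [hx]; exact div_mul_cancel₀ _ hA.ne'
      have hy' : y*(1-u) = |z1-z2| := by rw [hy]; exact div_mul_cancel₀ _ hB.ne'
      -- representations
      have hXrep : X = (1+u) * g ρ x := by
        rw [hX, Mm_rep hρ hP0 hQ0 (by rw [hP, hQ]; exact arith_PQ_sum h1a h2a)]
        have e1 : (P+Q)/2 = 1+u := by rw [hP, hQ, hu]; ring
        have e2 : |P-Q|/(P+Q) = x := by
          have : P - Q = 2*(z1+z2) := by rw [hP, hQ]; ring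
          rw [this, abs_of_nonneg (by linarith : (0:ℝ) ≤ 2*(z1+z2)),
            show P + Q = 2*(1+u) from by rw [hP, hQ, hu]; ring, hx,
            mul_div_mul_left _ _ (two_ne_zero)]
        rw [e1, e2]
      have hYrep : Y = (1-u) * g ρ y := by
        have hRS : 0 < R + S := by
          have e0 : R + S = 2*(1-u) := by rw [hR, hS, hu]; ring
          rw [e0]; linarith
        rw [hY, Mm_rep hρ hR0 hS0 hRS]
        have e1 : (R+S)/2 = 1-u := by rw [hR, hS, hu]; ring
        have e2 : |R-S|/(R+S) = y := by
          have : R - S = 2*(z1-z2) := by rw [hR, hS]; ring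
          rw [this, show R + S = 2*(1-u) from by rw [hR, hS, hu]; ring,
            show |2*(z1-z2)| = 2*|z1-z2| from by rw [abs_mul, abs_two], hy,
            mul_div_mul_left _ _ (two_ne_zero)]
        rw [e1, e2]
      -- key identity
      have Kid : (1+u)^2*(1-x^2) = (1-u)^2*(1-y^2) := by
        calc (1+u)^2*(1-x^2) = (1+u)^2 - (x*(1+u))^2 := by ring
          _ = (1+u)^2 - (z1+z2)^2 := by rw [hx']
          _ = (1-u)^2 - (z1-z2)^2 := by rw [hu]; ring
          _ = (1-u)^2 - |z1-z2|^2 := by rw [sq_abs]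
          _ = (1-u)^2 - (y*(1-u))^2 := by rw [hy']
          _ = (1-u)^2*(1-y^2) := by ring
      have hgxy : g ρ x ≤ g ρ y := g_anti hρ hy0 hyx hx1
      have hgx0 : 0 ≤ g ρ x := g_nonneg hρ (by linarith) hx1
      have hgy0 : 0 ≤ g ρ y := g_nonneg hρ (by linarith) hy1
      have C2sq : (1-u)^2 * g ρ y ≤ (1+u)^2 * g ρ x := by
        rcases eq_or_lt_of_le hx1 with hxe | hxlt
        · -- x = 1, hence y = 1
          have h0 : (1-u)^2*(1-y^2) = 0 := by
            rw [← Kid, hxe]; ring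
          have hy2 : 1 - y^2 = 0 := by
            rcases mul_eq_zero.mp h0 with h' | h'
            · exact absurd h' (pow_ne_zero 2 hB.ne')
            · exact h'
          have hye : y = 1 := by
            have hfac : (1-y)*(1+y) = 0 := by linear_combination hy2
            rcases mul_eq_zero.mp hfac with h' | h'
            · linarith
            · linarith
          rw [hye, hxe]
          have hsq : (1-u)^2 ≤ (1+u)^2 := arith_sq_le_sq hu0
          exact mul_le_mul_of_nonneg_right hsq (g_nonneg hρ (by linarith) le_rfl)
        · have h1x2 : 0 < 1 - x^2 := arith_one_sub_sq hx0 hxlt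
          have hKpos : 0 < (1-u)^2*(1-y^2) := by
            rw [← Kid]; exact mul_pos (pow_pos hA 2) h1x2
          have h1y2 : 0 < 1-y^2 := by
            rcases mul_pos_iff.mp hKpos with ⟨_, h'⟩ | ⟨h', _⟩
            · exact h'
            · exact absurd h' (not_lt.2 (sq_nonneg _))
          have step := mul_le_mul_of_nonneg_left (g_ratio_mono hρ hy0 hyx hxlt)
            (sq_nonneg (1+u))
          refine le_of_mul_le_mul_right ?_ h1y2
          calc (1-u)^2 * g ρ y * (1-y^2) = (1-u)^2*(1-y^2) * g ρ y := by ring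
            _ = (1+u)^2*(1-x^2) * g ρ y := by rw [Kid]
            _ = (1+u)^2 * (g ρ y * (1-x^2)) := by ring
            _ ≤ (1+u)^2 * (g ρ x * (1-y^2)) := step
            _ = (1+u)^2 * g ρ x * (1-y^2) := by ring
      rw [abs_le, hXrep, hYrep]
      exact ⟨arith_branch1 C2sq,
        arith_branch2 (mul_le_mul_of_nonneg_left hgxy (mul_nonneg (by linarith) (by linarith)))⟩
  -- conclude
  rw [h_eq hρ ⟨h1a, h1b⟩ ⟨h2a, h2b⟩, g_mul_g hρ ⟨by linarith, h1b⟩ ⟨by linarith, h2b⟩]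
  rw [← hP, ← hQ, ← hR, ← hS, ← hX, ← hY, Mm_rep hρ hX0 hY0 hSum]
  have hw0 : 0 ≤ |X-Y|/(X+Y) := by positivity
  have hwu : |X-Y|/(X+Y) ≤ u := by rw [div_le_iff₀ hSum]; exact key
  have hgu : g ρ u ≤ g ρ (|X-Y|/(X+Y)) := g_anti hρ hw0 hwu hu1
  have e : (1:ℝ)/2 * X + 1/2 * Y = (X+Y)/2 := by ring
  rw [e, mul_comm ((X+Y)/2)]
  exact mul_le_mul_of_nonneg_right hgu (by positivity)

end pointwise
section hprops
variable {ρ : ℝ} (hρ : 0 ≤ ρ)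
include hρ

lemma h_symm {z1 z2 : ℝ} (h1 : z1 ∈ Set.Icc (0:ℝ) 1) (h2 : z2 ∈ Set.Icc (0:ℝ) 1) :
    h ρ z1 z2 = h ρ z2 z1 := by
  have e1 : Mm ρ ((1+z2)*(1+z1)) ((1-z2)*(1-z1)) = Mm ρ ((1+z1)*(1+z2)) ((1-z1)*(1-z2)) := by
    rw [mul_comm, mul_comm (1-z2)]
  have e2 : Mm ρ ((1+z2)*(1-z1)) ((1-z2)*(1+z1)) = Mm ρ ((1+z1)*(1-z2)) ((1-z1)*(1+z2)) := by
    rw [Mm_symm, mul_comm, mul_comm (1+z2)]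
  rw [h_eq hρ h1 h2, h_eq hρ h2 h1, e1, e2]

lemma Mm_four : Mm ρ 4 4 = 4 := by
  rw [Mm]
  have e : (1:ℝ)/2 * (4:ℝ)^(1/(1+ρ)) + 1/2 * (4:ℝ)^(1/(1+ρ)) = (4:ℝ)^(1/(1+ρ)) := by ring
  rw [e, ← Real.rpow_mul (by norm_num : (0:ℝ) ≤ 4),
    one_div_mul_cancel (one_add_pos hρ).ne', Real.rpow_one]

lemma h_nonneg {z1 z2 : ℝ} (h1 : z1 ∈ Set.Icc (0:ℝ) 1) (h2 : z2 ∈ Set.Icc (0:ℝ) 1) :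
    0 ≤ h ρ z1 z2 := by
  obtain ⟨h1a, h1b⟩ := h1; obtain ⟨h2a, h2b⟩ := h2
  rw [h_eq hρ ⟨h1a, h1b⟩ ⟨h2a, h2b⟩]
  have m1 := Mm_nonneg hρ (mul_nonneg (by linarith : (0:ℝ) ≤ 1+z1) (by linarith : (0:ℝ) ≤ 1+z2))
    (mul_nonneg (by linarith : (0:ℝ) ≤ 1-z1) (by linarith : (0:ℝ) ≤ 1-z2))
  have m2 := Mm_nonneg hρ (mul_nonneg (by linarith : (0:ℝ) ≤ 1+z1) (by linarith : (0:ℝ) ≤ 1-z2))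
    (mul_nonneg (by linarith : (0:ℝ) ≤ 1-z1) (by linarith : (0:ℝ) ≤ 1+z2))
  linarith

lemma h_le_four {z1 z2 : ℝ} (h1 : z1 ∈ Set.Icc (0:ℝ) 1) (h2 : z2 ∈ Set.Icc (0:ℝ) 1) :
    h ρ z1 z2 ≤ 4 := by
  obtain ⟨h1a, h1b⟩ := h1; obtain ⟨h2a, h2b⟩ := h2
  rw [h_eq hρ ⟨h1a, h1b⟩ ⟨h2a, h2b⟩]
  have b1 : Mm ρ ((1+z1)*(1+z2)) ((1-z1)*(1-z2)) ≤ 4 := by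
    rw [← Mm_four hρ]
    exact Mm_mono hρ (mul_nonneg (by linarith) (by linarith))
      (mul_nonneg (by linarith) (by linarith)) (by nlinarith) (by nlinarith)
  have b2 : Mm ρ ((1+z1)*(1-z2)) ((1-z1)*(1+z2)) ≤ 4 := by
    rw [← Mm_four hρ]
    exact Mm_mono hρ (mul_nonneg (by linarith) (by linarith))
      (mul_nonneg (by linarith) (by linarith)) (by nlinarith) (by nlinarith)
  linarith

/-- `h` is antitone in its first argument. -/
lemma h_anti_left {x y z2 : ℝ} (h2 : z2 ∈ Set.Icc (0:ℝ) 1)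
    (hy : 0 ≤ y) (hxy : y ≤ x) (hx : x ≤ 1) : h ρ x z2 ≤ h ρ y z2 := by
  obtain ⟨h2a, h2b⟩ := h2
  have hc : (0:ℝ) ≤ 1+z2 := by linarith
  have hd : (0:ℝ) ≤ 1-z2 := by linarith
  rcases eq_or_lt_of_le (hy.trans hxy) with hx0 | hx0
  · have hyx0 : y = 0 := le_antisymm (by linarith) hy
    rw [hyx0, ← hx0]
  · set l := (x+y)/(2*x) with hl
    have hx0' : (0:ℝ) < 2*x := by linarith
    have hl0 : 0 ≤ l := by positivity
    have hl1 : l ≤ 1 := by rw [hl, div_le_one hx0']; linarith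
    have hl1'' : 0 ≤ 1 - l := by linarith
    have hax : (0:ℝ) ≤ 1+x := by linarith
    have hbx : (0:ℝ) ≤ 1-x := by linarith
    have eplus : (1:ℝ)+y = l*(1+x) + (1-l)*(1-x) := by rw [hl]; field_simp; ring
    have eminus : (1:ℝ)-y = l*(1-x) + (1-l)*(1+x) := by rw [hl]; field_simp; ring
    -- term 1
    have T1 : l * Mm ρ ((1+x)*(1+z2)) ((1-x)*(1-z2))
        + (1-l) * Mm ρ ((1-x)*(1+z2)) ((1+x)*(1-z2))
        ≤ Mm ρ ((1+y)*(1+z2)) ((1-y)*(1-z2)) := by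
      have e1 : (1+y)*(1+z2) = l*((1+x)*(1+z2)) + (1-l)*((1-x)*(1+z2)) := by
        rw [eplus]; ring
      have e2 : (1-y)*(1-z2) = l*((1-x)*(1-z2)) + (1-l)*((1+x)*(1-z2)) := by
        rw [eminus]; ring
      rw [e1, e2]
      calc l * Mm ρ ((1+x)*(1+z2)) ((1-x)*(1-z2))
            + (1-l) * Mm ρ ((1-x)*(1+z2)) ((1+x)*(1-z2))
          = Mm ρ (l*((1+x)*(1+z2))) (l*((1-x)*(1-z2)))
            + Mm ρ ((1-l)*((1-x)*(1+z2))) ((1-l)*((1+x)*(1-z2))) := by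
            rw [Mm_homog hρ hl0 (mul_nonneg hax hc) (mul_nonneg hbx hd),
              Mm_homog hρ hl1'' (mul_nonneg hbx hc) (mul_nonneg hax hd)]
        _ ≤ _ := Mm_superadd hρ (by positivity) (by positivity) (by positivity) (by positivity)
    -- term 2
    have T2 : l * Mm ρ ((1+x)*(1-z2)) ((1-x)*(1+z2))
        + (1-l) * Mm ρ ((1-x)*(1-z2)) ((1+x)*(1+z2))
        ≤ Mm ρ ((1+y)*(1-z2)) ((1-y)*(1+z2)) := by
      have e1 : (1+y)*(1-z2) = l*((1+x)*(1-z2)) + (1-l)*((1-x)*(1-z2)) := by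
        rw [eplus]; ring
      have e2 : (1-y)*(1+z2) = l*((1-x)*(1+z2)) + (1-l)*((1+x)*(1+z2)) := by
        rw [eminus]; ring
      rw [e1, e2]
      calc l * Mm ρ ((1+x)*(1-z2)) ((1-x)*(1+z2))
            + (1-l) * Mm ρ ((1-x)*(1-z2)) ((1+x)*(1+z2))
          = Mm ρ (l*((1+x)*(1-z2))) (l*((1-x)*(1+z2)))
            + Mm ρ ((1-l)*((1-x)*(1-z2))) ((1-l)*((1+x)*(1+z2))) := by
            rw [Mm_homog hρ hl0 (mul_nonneg hax hd) (mul_nonneg hbx hc),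
              Mm_homog hρ hl1'' (mul_nonneg hbx hd) (mul_nonneg hax hc)]
        _ ≤ _ := Mm_superadd hρ (by positivity) (by positivity) (by positivity) (by positivity)
    -- combine
    rw [h_eq hρ ⟨by linarith, by linarith⟩ ⟨h2a, h2b⟩,
      h_eq hρ ⟨hy, by linarith⟩ ⟨h2a, h2b⟩]
    have s1 : Mm ρ ((1-x)*(1+z2)) ((1+x)*(1-z2)) = Mm ρ ((1+x)*(1-z2)) ((1-x)*(1+z2)) :=
      Mm_symm ρ _ _
    have s2 : Mm ρ ((1-x)*(1-z2)) ((1+x)*(1+z2)) = Mm ρ ((1+x)*(1+z2)) ((1-x)*(1-z2)) :=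
      Mm_symm ρ _ _
    rw [s1] at T1; rw [s2] at T2
    linarith

lemma h_anti_right {z1 x y : ℝ} (h1 : z1 ∈ Set.Icc (0:ℝ) 1)
    (hy : 0 ≤ y) (hxy : y ≤ x) (hx : x ≤ 1) : h ρ z1 x ≤ h ρ z1 y := by
  rw [h_symm hρ h1 ⟨hy.trans hxy, hx⟩, h_symm hρ h1 ⟨hy, hxy.trans hx⟩]
  exact h_anti_left hρ h1 hy hxy hx

end hprops
section chebyshev
open MeasureTheory

/-- One-dimensional Chebyshev correlation inequality for two functions antitone on `[0,1]`,
for a probability measure supported on `[0,1]`. -/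
lemma cheb_int {ν : Measure ℝ} [IsProbabilityMeasure ν]
    (hsupp : ∀ᵐ x ∂ν, x ∈ Set.Icc (0:ℝ) 1)
    {f1 f2 : ℝ → ℝ} (hm1 : StronglyMeasurable f1) (hm2 : StronglyMeasurable f2)
    {C1 C2 : ℝ}
    (hb1 : ∀ x ∈ Set.Icc (0:ℝ) 1, |f1 x| ≤ C1) (hb2 : ∀ x ∈ Set.Icc (0:ℝ) 1, |f2 x| ≤ C2)
    (ha1 : ∀ x ∈ Set.Icc (0:ℝ) 1, ∀ y ∈ Set.Icc (0:ℝ) 1, x ≤ y → f1 y ≤ f1 x)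
    (ha2 : ∀ x ∈ Set.Icc (0:ℝ) 1, ∀ y ∈ Set.Icc (0:ℝ) 1, x ≤ y → f2 y ≤ f2 x) :
    (∫ x, f1 x ∂ν) * (∫ x, f2 x ∂ν) ≤ ∫ x, f1 x * f2 x ∂ν := by
  set Pr := ν.prod ν with hPr
  have hfst : ∀ᵐ p : ℝ × ℝ ∂Pr, p.1 ∈ Set.Icc (0:ℝ) 1 := by
    rw [ae_iff]
    have hset : {p : ℝ × ℝ | ¬ p.1 ∈ Set.Icc (0:ℝ) 1}
        = {x : ℝ | ¬ x ∈ Set.Icc (0:ℝ) 1} ×ˢ (Set.univ : Set ℝ) := by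
      ext p; simp
    rw [hPr, hset, MeasureTheory.Measure.prod_prod, measure_univ, mul_one]
    exact ae_iff.mp hsupp
  have hsnd : ∀ᵐ p : ℝ × ℝ ∂Pr, p.2 ∈ Set.Icc (0:ℝ) 1 := by
    rw [ae_iff]
    have hset : {p : ℝ × ℝ | ¬ p.2 ∈ Set.Icc (0:ℝ) 1}
        = (Set.univ : Set ℝ) ×ˢ {x : ℝ | ¬ x ∈ Set.Icc (0:ℝ) 1} := by
      ext p; simp
    rw [hPr, hset, MeasureTheory.Measure.prod_prod, measure_univ, one_mul]
    exact ae_iff.mp hsupp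
  have hsupp2 : ∀ᵐ p : ℝ × ℝ ∂Pr, p.1 ∈ Set.Icc (0:ℝ) 1 ∧ p.2 ∈ Set.Icc (0:ℝ) 1 :=
    hfst.and hsnd
  -- integrability of the various pieces
  have hIaux : ∀ (u1 u2 : ℝ → ℝ), StronglyMeasurable u1 → StronglyMeasurable u2 →
      (∀ x ∈ Set.Icc (0:ℝ) 1, |u1 x| ≤ C1) → (∀ x ∈ Set.Icc (0:ℝ) 1, |u2 x| ≤ C2) →
      ∀ (w1 w2 : (ℝ × ℝ) → ℝ), (w1 = fun p => u1 p.1) ∨ (w1 = fun p => u1 p.2) →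
      (w2 = fun p => u2 p.1) ∨ (w2 = fun p => u2 p.2) →
      Integrable (fun p => w1 p * w2 p) Pr := by
    intro u1 u2 hsm1 hsm2 hub1 hub2 w1 w2 hw1 hw2
    have hmw1 : StronglyMeasurable w1 := by
      rcases hw1 with rfl | rfl
      · exact hsm1.comp_measurable measurable_fst
      · exact hsm1.comp_measurable measurable_snd
    have hmw2 : StronglyMeasurable w2 := by
      rcases hw2 with rfl | rfl
      · exact hsm2.comp_measurable measurable_fst
      · exact hsm2.comp_measurable measurable_snd
    refine (integrable_const (C1 * C2)).mono' (hmw1.mul hmw2).aestronglyMeasurable ?_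
    filter_upwards [hsupp2] with p hp
    have h1 : |w1 p| ≤ C1 := by
      rcases hw1 with rfl | rfl
      · exact hub1 _ hp.1
      · exact hub1 _ hp.2
    have h2 : |w2 p| ≤ C2 := by
      rcases hw2 with rfl | rfl
      · exact hub2 _ hp.1
      · exact hub2 _ hp.2
    have h10 : 0 ≤ |w1 p| := abs_nonneg _
    have h20 : 0 ≤ |w2 p| := abs_nonneg _
    calc ‖w1 p * w2 p‖ = |w1 p| * |w2 p| := by rw [Real.norm_eq_abs, abs_mul]
      _ ≤ C1 * C2 := mul_le_mul h1 h2 h20 (le_trans h10 h1)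
  have I11 : Integrable (fun p : ℝ × ℝ => f1 p.1 * f2 p.1) Pr :=
    hIaux f1 f2 hm1 hm2 hb1 hb2 _ _ (Or.inl rfl) (Or.inl rfl)
  have I22 : Integrable (fun p : ℝ × ℝ => f1 p.2 * f2 p.2) Pr :=
    hIaux f1 f2 hm1 hm2 hb1 hb2 _ _ (Or.inr rfl) (Or.inr rfl)
  have I12 : Integrable (fun p : ℝ × ℝ => f1 p.1 * f2 p.2) Pr :=
    hIaux f1 f2 hm1 hm2 hb1 hb2 _ _ (Or.inl rfl) (Or.inr rfl)
  have I21 : Integrable (fun p : ℝ × ℝ => f1 p.2 * f2 p.1) Pr :=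
    hIaux f1 f2 hm1 hm2 hb1 hb2 _ _ (Or.inr rfl) (Or.inl rfl)
  -- positivity of the rearrangement integrand
  have hpos : 0 ≤ ∫ p : ℝ × ℝ, (f1 p.1 - f1 p.2) * (f2 p.1 - f2 p.2) ∂Pr := by
    refine integral_nonneg_of_ae ?_
    filter_upwards [hsupp2] with p hp
    rcases le_total p.1 p.2 with hle | hle
    · have a1 : f1 p.2 ≤ f1 p.1 := ha1 _ hp.1 _ hp.2 hle
      have a2 : f2 p.2 ≤ f2 p.1 := ha2 _ hp.1 _ hp.2 hle
      exact mul_nonneg (by linarith) (by linarith)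
    · have a1 : f1 p.1 ≤ f1 p.2 := ha1 _ hp.2 _ hp.1 hle
      have a2 : f2 p.1 ≤ f2 p.2 := ha2 _ hp.2 _ hp.1 hle
      have hm := mul_nonneg (by linarith : (0:ℝ) ≤ f1 p.2 - f1 p.1)
        (by linarith : (0:ℝ) ≤ f2 p.2 - f2 p.1)
      have he : (f1 p.1 - f1 p.2) * (f2 p.1 - f2 p.2)
          = (f1 p.2 - f1 p.1) * (f2 p.2 - f2 p.1) := by ring
      rw [he]; exact hm
  have hexpand : (fun p : ℝ × ℝ => (f1 p.1 - f1 p.2) * (f2 p.1 - f2 p.2))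
      = fun p : ℝ × ℝ => ((f1 p.1 * f2 p.1 + f1 p.2 * f2 p.2) - f1 p.1 * f2 p.2)
        - f1 p.2 * f2 p.1 := by
    funext p; ring
  have IA : Integrable (fun p : ℝ × ℝ => f1 p.1 * f2 p.1 + f1 p.2 * f2 p.2) Pr := I11.add I22
  have IB : Integrable (fun p : ℝ × ℝ => f1 p.1 * f2 p.1 + f1 p.2 * f2 p.2
      - f1 p.1 * f2 p.2) Pr := IA.sub I12
  rw [hexpand, integral_sub IB I21, integral_sub IA I12, integral_add I11 I22] at hpos
  -- evaluate the four integrals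
  have hInt12 : Integrable (fun x => f1 x * f2 x) ν := by
    refine (integrable_const (C1 * C2)).mono' (hm1.mul hm2).aestronglyMeasurable ?_
    filter_upwards [hsupp] with x hx
    have h1 := hb1 x hx; have h2 := hb2 x hx
    calc ‖f1 x * f2 x‖ = |f1 x| * |f2 x| := by rw [Real.norm_eq_abs, abs_mul]
      _ ≤ C1 * C2 := mul_le_mul h1 h2 (abs_nonneg _) (le_trans (abs_nonneg _) h1)
  have e11 : ∫ p : ℝ × ℝ, f1 p.1 * f2 p.1 ∂Pr = ∫ x, f1 x * f2 x ∂ν := by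
    have := MeasureTheory.integral_prod_mul (μ := ν) (ν := ν)
      (f := fun x => f1 x * f2 x) (g := fun _ => (1:ℝ))
    simpa using this
  have e22 : ∫ p : ℝ × ℝ, f1 p.2 * f2 p.2 ∂Pr = ∫ x, f1 x * f2 x ∂ν := by
    have := MeasureTheory.integral_prod_mul (μ := ν) (ν := ν)
      (f := fun _ => (1:ℝ)) (g := fun x => f1 x * f2 x)
    simpa using this
  have e12 : ∫ p : ℝ × ℝ, f1 p.1 * f2 p.2 ∂Pr = (∫ x, f1 x ∂ν) * (∫ x, f2 x ∂ν) :=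
    MeasureTheory.integral_prod_mul (μ := ν) (ν := ν) (f := f1) (g := f2)
  have e21 : ∫ p : ℝ × ℝ, f1 p.2 * f2 p.1 ∂Pr = (∫ x, f2 x ∂ν) * (∫ x, f1 x ∂ν) := by
    have h' : (fun p : ℝ × ℝ => f1 p.2 * f2 p.1) = fun p : ℝ × ℝ => f2 p.1 * f1 p.2 := by
      funext p; ring
    rw [h']
    exact MeasureTheory.integral_prod_mul (μ := ν) (ν := ν) (f := f2) (g := f1)
  rw [e11, e22, e12, e21] at hpos
  linarith

end chebyshev
section fkg
open MeasureTheory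

lemma fkg_int {ν : Measure ℝ} [IsProbabilityMeasure ν]
    (hsupp : ∀ᵐ x ∂ν, x ∈ Set.Icc (0:ℝ) 1)
    {A B : ℝ → ℝ → ℝ} {CA CB : ℝ}
    (hmA : StronglyMeasurable (fun p : ℝ × ℝ => A p.1 p.2))
    (hmB : StronglyMeasurable (fun p : ℝ × ℝ => B p.1 p.2))
    (hbA : ∀ x ∈ Set.Icc (0:ℝ) 1, ∀ y ∈ Set.Icc (0:ℝ) 1, |A x y| ≤ CA)
    (hbB : ∀ x ∈ Set.Icc (0:ℝ) 1, ∀ y ∈ Set.Icc (0:ℝ) 1, |B x y| ≤ CB)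
    (haA1 : ∀ y ∈ Set.Icc (0:ℝ) 1, ∀ x ∈ Set.Icc (0:ℝ) 1, ∀ x' ∈ Set.Icc (0:ℝ) 1,
      x ≤ x' → A x' y ≤ A x y)
    (haA2 : ∀ x ∈ Set.Icc (0:ℝ) 1, ∀ y ∈ Set.Icc (0:ℝ) 1, ∀ y' ∈ Set.Icc (0:ℝ) 1,
      y ≤ y' → A x y' ≤ A x y)
    (haB1 : ∀ y ∈ Set.Icc (0:ℝ) 1, ∀ x ∈ Set.Icc (0:ℝ) 1, ∀ x' ∈ Set.Icc (0:ℝ) 1,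
      x ≤ x' → B x' y ≤ B x y)
    (haB2 : ∀ x ∈ Set.Icc (0:ℝ) 1, ∀ y ∈ Set.Icc (0:ℝ) 1, ∀ y' ∈ Set.Icc (0:ℝ) 1,
      y ≤ y' → B x y' ≤ B x y) :
    (∫ p : ℝ × ℝ, A p.1 p.2 ∂(ν.prod ν)) * (∫ p : ℝ × ℝ, B p.1 p.2 ∂(ν.prod ν))
      ≤ ∫ p : ℝ × ℝ, A p.1 p.2 * B p.1 p.2 ∂(ν.prod ν) := by
  have h0 : (0:ℝ) ∈ Set.Icc (0:ℝ) 1 := ⟨le_rfl, zero_le_one⟩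
  have hCA0 : 0 ≤ CA := le_trans (abs_nonneg _) (hbA 0 h0 0 h0)
  have hCB0 : 0 ≤ CB := le_trans (abs_nonneg _) (hbB 0 h0 0 h0)
  have hfst : ∀ᵐ p : ℝ × ℝ ∂(ν.prod ν), p.1 ∈ Set.Icc (0:ℝ) 1 := by
    rw [ae_iff]
    have hset : {p : ℝ × ℝ | ¬ p.1 ∈ Set.Icc (0:ℝ) 1}
        = {x : ℝ | ¬ x ∈ Set.Icc (0:ℝ) 1} ×ˢ (Set.univ : Set ℝ) := by ext p; simp
    rw [hset, MeasureTheory.Measure.prod_prod, measure_univ, mul_one]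
    exact ae_iff.mp hsupp
  have hsnd : ∀ᵐ p : ℝ × ℝ ∂(ν.prod ν), p.2 ∈ Set.Icc (0:ℝ) 1 := by
    rw [ae_iff]
    have hset : {p : ℝ × ℝ | ¬ p.2 ∈ Set.Icc (0:ℝ) 1}
        = (Set.univ : Set ℝ) ×ˢ {x : ℝ | ¬ x ∈ Set.Icc (0:ℝ) 1} := by ext p; simp
    rw [hset, MeasureTheory.Measure.prod_prod, measure_univ, one_mul]
    exact ae_iff.mp hsupp
  have hsupp2 : ∀ᵐ p : ℝ × ℝ ∂(ν.prod ν),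
      p.1 ∈ Set.Icc (0:ℝ) 1 ∧ p.2 ∈ Set.Icc (0:ℝ) 1 := hfst.and hsnd
  -- generic integrability on the product
  have hIprod : ∀ (F : ℝ → ℝ → ℝ) (CF : ℝ), StronglyMeasurable (fun p : ℝ × ℝ => F p.1 p.2) →
      (∀ x ∈ Set.Icc (0:ℝ) 1, ∀ y ∈ Set.Icc (0:ℝ) 1, |F x y| ≤ CF) →
      Integrable (fun p : ℝ × ℝ => F p.1 p.2) (ν.prod ν) := by
    intro F CF hm hb
    refine (integrable_const CF).mono' hm.aestronglyMeasurable ?_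
    filter_upwards [hsupp2] with p hp
    rw [Real.norm_eq_abs]
    exact hb _ hp.1 _ hp.2
  -- generic slice integrability and bounds
  have hIslice : ∀ (F : ℝ → ℝ → ℝ) (CF : ℝ), StronglyMeasurable (fun p : ℝ × ℝ => F p.1 p.2) →
      (∀ x ∈ Set.Icc (0:ℝ) 1, ∀ y ∈ Set.Icc (0:ℝ) 1, |F x y| ≤ CF) →
      ∀ x ∈ Set.Icc (0:ℝ) 1, Integrable (fun y => F x y) ν := by
    intro F CF hm hb x hx
    refine (integrable_const CF).mono'
      ((hm.comp_measurable (measurable_prodMk_left (x := x))).aestronglyMeasurable) ?_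
    filter_upwards [hsupp] with y hy
    rw [Real.norm_eq_abs]
    exact hb _ hx _ hy
  have hbint : ∀ (F : ℝ → ℝ → ℝ) (CF : ℝ), StronglyMeasurable (fun p : ℝ × ℝ => F p.1 p.2) →
      (∀ x ∈ Set.Icc (0:ℝ) 1, ∀ y ∈ Set.Icc (0:ℝ) 1, |F x y| ≤ CF) →
      ∀ x ∈ Set.Icc (0:ℝ) 1, |∫ y, F x y ∂ν| ≤ CF := by
    intro F CF hm hb x hx
    have := MeasureTheory.norm_integral_le_of_norm_le_const
      (f := fun y => F x y) (C := CF) (μ := ν) ?_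
    · rw [Real.norm_eq_abs] at this
      simpa [measure_univ] using this
    · filter_upwards [hsupp] with y hy
      rw [Real.norm_eq_abs]
      exact hb _ hx _ hy
  have hmAB : StronglyMeasurable (fun p : ℝ × ℝ => A p.1 p.2 * B p.1 p.2) := hmA.mul hmB
  have hbAB : ∀ x ∈ Set.Icc (0:ℝ) 1, ∀ y ∈ Set.Icc (0:ℝ) 1, |A x y * B x y| ≤ CA*CB := by
    intro x hx y hy
    rw [abs_mul]
    exact mul_le_mul (hbA _ hx _ hy) (hbB _ hx _ hy) (abs_nonneg _) hCA0
  have IA : Integrable (fun p : ℝ × ℝ => A p.1 p.2) (ν.prod ν) := hIprod A CA hmA hbA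
  have IB : Integrable (fun p : ℝ × ℝ => B p.1 p.2) (ν.prod ν) := hIprod B CB hmB hbB
  have IAB : Integrable (fun p : ℝ × ℝ => A p.1 p.2 * B p.1 p.2) (ν.prod ν) :=
    hIprod _ (CA*CB) hmAB hbAB
  -- marginals
  set aa := fun x => ∫ y, A x y ∂ν with haa
  set bb := fun x => ∫ y, B x y ∂ν with hbb
  have hmaa : StronglyMeasurable aa := hmA.integral_prod_right'
  have hmbb : StronglyMeasurable bb := hmB.integral_prod_right'
  have haabound : ∀ x ∈ Set.Icc (0:ℝ) 1, |aa x| ≤ CA := hbint A CA hmA hbA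
  have hbbbound : ∀ x ∈ Set.Icc (0:ℝ) 1, |bb x| ≤ CB := hbint B CB hmB hbB
  have haaanti : ∀ x ∈ Set.Icc (0:ℝ) 1, ∀ x' ∈ Set.Icc (0:ℝ) 1, x ≤ x' → aa x' ≤ aa x := by
    intro x hx x' hx' hxx'
    refine integral_mono_ae (hIslice A CA hmA hbA x' hx') (hIslice A CA hmA hbA x hx) ?_
    filter_upwards [hsupp] with y hy
    exact haA1 y hy x hx x' hx' hxx'
  have hbbanti : ∀ x ∈ Set.Icc (0:ℝ) 1, ∀ x' ∈ Set.Icc (0:ℝ) 1, x ≤ x' → bb x' ≤ bb x := by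
    intro x hx x' hx' hxx'
    refine integral_mono_ae (hIslice B CB hmB hbB x' hx') (hIslice B CB hmB hbB x hx) ?_
    filter_upwards [hsupp] with y hy
    exact haB1 y hy x hx x' hx' hxx'
  -- inner Chebyshev
  have hinner : ∀ x ∈ Set.Icc (0:ℝ) 1, aa x * bb x ≤ ∫ y, A x y * B x y ∂ν := by
    intro x hx
    exact cheb_int hsupp (hmA.comp_measurable (measurable_prodMk_left (x := x)))
      (hmB.comp_measurable (measurable_prodMk_left (x := x)))
      (fun y hy => hbA _ hx _ hy) (fun y hy => hbB _ hx _ hy)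
      (fun y hy y' hy' hyy' => haA2 x hx y hy y' hy' hyy')
      (fun y hy y' hy' hyy' => haB2 x hx y hy y' hy' hyy')
  -- Fubini
  have fubA : ∫ p : ℝ × ℝ, A p.1 p.2 ∂(ν.prod ν) = ∫ x, aa x ∂ν :=
    MeasureTheory.integral_prod _ IA
  have fubB : ∫ p : ℝ × ℝ, B p.1 p.2 ∂(ν.prod ν) = ∫ x, bb x ∂ν :=
    MeasureTheory.integral_prod _ IB
  have fubAB : ∫ p : ℝ × ℝ, A p.1 p.2 * B p.1 p.2 ∂(ν.prod ν)
      = ∫ x, (∫ y, A x y * B x y ∂ν) ∂ν := MeasureTheory.integral_prod _ IAB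
  -- outer comparison
  have hIone : Integrable (fun x => ∫ y, A x y * B x y ∂ν) ν := by
    refine (integrable_const (CA*CB)).mono' (hmAB.integral_prod_right').aestronglyMeasurable ?_
    filter_upwards [hsupp] with x hx
    rw [Real.norm_eq_abs]
    exact hbint _ (CA*CB) hmAB hbAB x hx
  have hIaabb : Integrable (fun x => aa x * bb x) ν := by
    refine (integrable_const (CA*CB)).mono' (hmaa.mul hmbb).aestronglyMeasurable ?_
    filter_upwards [hsupp] with x hx
    rw [Real.norm_eq_abs, abs_mul]
    exact mul_le_mul (haabound x hx) (hbbbound x hx) (abs_nonneg _) hCA0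
  have houter : ∫ x, aa x * bb x ∂ν ≤ ∫ x, (∫ y, A x y * B x y ∂ν) ∂ν := by
    refine integral_mono_ae hIaabb hIone ?_
    filter_upwards [hsupp] with x hx
    exact hinner x hx
  have hcheb := cheb_int hsupp hmaa hmbb haabound hbbbound haaanti hbbanti
  rw [fubA, fubB, fubAB]
  linarith

end fkg
section main
open MeasureTheory

lemma g_cont {ρ : ℝ} (hρ : 0 ≤ ρ) : Continuous (g ρ) := by
  have c1 : Continuous fun z : ℝ => (1+z) ^ (1/(1+ρ)) :=
    (Real.continuous_rpow_const (alpha_pos hρ).le).comp (continuous_const.add continuous_id)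
  have c2 : Continuous fun z : ℝ => (1-z) ^ (1/(1+ρ)) :=
    (Real.continuous_rpow_const (alpha_pos hρ).le).comp (continuous_const.sub continuous_id)
  have cinner : Continuous fun z : ℝ =>
      (1/2) * (1+z) ^ (1/(1+ρ)) + (1/2) * (1-z) ^ (1/(1+ρ)) :=
    (continuous_const.mul c1).add (continuous_const.mul c2)
  exact (Real.continuous_rpow_const (one_add_pos hρ).le).comp cinner

lemma h_meas {ρ : ℝ} (hρ : 0 ≤ ρ) : Measurable fun p : ℝ × ℝ => h ρ p.1 p.2 := by
  have hg : Measurable (g ρ) := (g_cont hρ).measurable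
  have m_u : Measurable fun p : ℝ × ℝ => p.1 * p.2 := measurable_fst.mul measurable_snd
  have m1 : Measurable fun p : ℝ × ℝ =>
      (1/2) * (1 + p.1*p.2) * g ρ ((p.1 + p.2)/(1 + p.1*p.2)) :=
    (measurable_const.mul (measurable_const.add m_u)).mul
      (hg.comp ((measurable_fst.add measurable_snd).div (measurable_const.add m_u)))
  have m2 : Measurable fun p : ℝ × ℝ =>
      (1/2) * (1 - p.1*p.2) * g ρ (|p.1 - p.2|/(1 - p.1*p.2)) :=
    (measurable_const.mul (measurable_const.sub m_u)).mul
      (hg.comp (((measurable_fst.sub measurable_snd).abs).div (measurable_const.sub m_u)))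
  exact m1.add m2

theorem E0_submartingale {Ω : Type*} [MeasurableSpace Ω] (μ : Measure Ω)
    [IsProbabilityMeasure μ] (Z1 Z2 : Ω → ℝ)
    (hm1 : Measurable Z1) (hm2 : Measurable Z2)
    (hindep : ProbabilityTheory.IndepFun Z1 Z2 μ)
    (hid : ProbabilityTheory.IdentDistrib Z1 Z2 μ μ)
    (hr1 : ∀ ω, Z1 ω ∈ Set.Icc (0:ℝ) 1) (hr2 : ∀ ω, Z2 ω ∈ Set.Icc (0:ℝ) 1)
    (ρ : ℝ) (hρ : 0 ≤ ρ) :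
    (∫ ω, g ρ (Z1 ω) ∂μ) * (∫ ω, g ρ (Z2 ω) ∂μ) ≥
      (∫ ω, g ρ (Z1 ω * Z2 ω) ∂μ) * (∫ ω, h ρ (Z1 ω) (Z2 ω) ∂μ) := by
  set ν := Measure.map Z1 μ with hν
  haveI : IsProbabilityMeasure ν := Measure.isProbabilityMeasure_map hm1.aemeasurable
  have hmapZ2 : Measure.map Z2 μ = ν := hid.map_eq.symm
  have hpairm : Measurable fun ω => (Z1 ω, Z2 ω) := hm1.prodMk hm2
  have hprod : Measure.map (fun ω => (Z1 ω, Z2 ω)) μ = ν.prod ν := by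
    have := (ProbabilityTheory.indepFun_iff_map_prod_eq_prod_map_map
      hm1.aemeasurable hm2.aemeasurable).mp hindep
    rw [hmapZ2] at this
    exact this
  have hsupp : ∀ᵐ x ∂ν, x ∈ Set.Icc (0:ℝ) 1 := by
    rw [hν]
    exact (MeasureTheory.ae_map_iff hm1.aemeasurable measurableSet_Icc).mpr (ae_of_all _ hr1)
  -- a.e. membership on the product
  have hfst : ∀ᵐ p : ℝ × ℝ ∂(ν.prod ν), p.1 ∈ Set.Icc (0:ℝ) 1 := by
    rw [ae_iff]
    have hset : {p : ℝ × ℝ | ¬ p.1 ∈ Set.Icc (0:ℝ) 1}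
        = {x : ℝ | ¬ x ∈ Set.Icc (0:ℝ) 1} ×ˢ (Set.univ : Set ℝ) := by ext p; simp
    rw [hset, MeasureTheory.Measure.prod_prod, measure_univ, mul_one]
    exact ae_iff.mp hsupp
  have hsnd : ∀ᵐ p : ℝ × ℝ ∂(ν.prod ν), p.2 ∈ Set.Icc (0:ℝ) 1 := by
    rw [ae_iff]
    have hset : {p : ℝ × ℝ | ¬ p.2 ∈ Set.Icc (0:ℝ) 1}
        = (Set.univ : Set ℝ) ×ˢ {x : ℝ | ¬ x ∈ Set.Icc (0:ℝ) 1} := by ext p; simp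
    rw [hset, MeasureTheory.Measure.prod_prod, measure_univ, one_mul]
    exact ae_iff.mp hsupp
  have hsupp2 : ∀ᵐ p : ℝ × ℝ ∂(ν.prod ν),
      p.1 ∈ Set.Icc (0:ℝ) 1 ∧ p.2 ∈ Set.Icc (0:ℝ) 1 := hfst.and hsnd
  -- measurability
  have hgm : Measurable (g ρ) := (g_cont hρ).measurable
  have hmA : StronglyMeasurable fun p : ℝ × ℝ => g ρ (p.1*p.2) :=
    (hgm.comp (measurable_fst.mul measurable_snd)).stronglyMeasurable
  have hmB : StronglyMeasurable fun p : ℝ × ℝ => h ρ p.1 p.2 := (h_meas hρ).stronglyMeasurable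
  -- bounds
  have hbA : ∀ x ∈ Set.Icc (0:ℝ) 1, ∀ y ∈ Set.Icc (0:ℝ) 1, |g ρ (x*y)| ≤ 1 := by
    intro x hx y hy
    have hxy0 : 0 ≤ x*y := mul_nonneg hx.1 hy.1
    have hxy1 : x*y ≤ 1 := arith_mul_le_one hx.1 hx.2 hy.1 hy.2
    rw [abs_of_nonneg (g_nonneg hρ (by linarith) hxy1)]
    exact g_le_one hρ hxy0 hxy1
  have hbB : ∀ x ∈ Set.Icc (0:ℝ) 1, ∀ y ∈ Set.Icc (0:ℝ) 1, |h ρ x y| ≤ 4 := by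
    intro x hx y hy
    rw [abs_of_nonneg (h_nonneg hρ hx hy)]
    exact h_le_four hρ hx hy
  -- antitonicity
  have haA1 : ∀ y ∈ Set.Icc (0:ℝ) 1, ∀ x ∈ Set.Icc (0:ℝ) 1, ∀ x' ∈ Set.Icc (0:ℝ) 1,
      x ≤ x' → g ρ (x'*y) ≤ g ρ (x*y) := by
    intro y hy x hx x' hx' hxx'
    exact g_anti hρ (mul_nonneg hx.1 hy.1) (mul_le_mul_of_nonneg_right hxx' hy.1)
      (arith_mul_le_one hx'.1 hx'.2 hy.1 hy.2)
  have haA2 : ∀ x ∈ Set.Icc (0:ℝ) 1, ∀ y ∈ Set.Icc (0:ℝ) 1, ∀ y' ∈ Set.Icc (0:ℝ) 1,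
      y ≤ y' → g ρ (x*y') ≤ g ρ (x*y) := by
    intro x hx y hy y' hy' hyy'
    exact g_anti hρ (mul_nonneg hx.1 hy.1) (mul_le_mul_of_nonneg_left hyy' hx.1)
      (arith_mul_le_one hx.1 hx.2 hy'.1 hy'.2)
  have haB1 : ∀ y ∈ Set.Icc (0:ℝ) 1, ∀ x ∈ Set.Icc (0:ℝ) 1, ∀ x' ∈ Set.Icc (0:ℝ) 1,
      x ≤ x' → h ρ x' y ≤ h ρ x y := fun y hy x hx x' hx' hxx' =>
    h_anti_left hρ hy hx.1 hxx' hx'.2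
  have haB2 : ∀ x ∈ Set.Icc (0:ℝ) 1, ∀ y ∈ Set.Icc (0:ℝ) 1, ∀ y' ∈ Set.Icc (0:ℝ) 1,
      y ≤ y' → h ρ x y' ≤ h ρ x y := fun x hx y hy y' hy' hyy' =>
    h_anti_right hρ hx hy.1 hyy' hy'.2
  -- FKG
  have hfkg := fkg_int hsupp hmA hmB hbA hbB haA1 haA2 haB1 haB2
  -- pointwise comparison on the product
  have IgAB : Integrable (fun p : ℝ × ℝ => g ρ (p.1*p.2) * h ρ p.1 p.2) (ν.prod ν) := by
    refine (integrable_const (4:ℝ)).mono' (hmA.mul hmB).aestronglyMeasurable ?_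
    filter_upwards [hsupp2] with p hp
    rw [Real.norm_eq_abs, abs_mul]
    calc |g ρ (p.1*p.2)| * |h ρ p.1 p.2| ≤ 1 * 4 :=
          mul_le_mul (hbA _ hp.1 _ hp.2) (hbB _ hp.1 _ hp.2) (abs_nonneg _) zero_le_one
      _ = 4 := by norm_num
  have Igg : Integrable (fun p : ℝ × ℝ => g ρ p.1 * g ρ p.2) (ν.prod ν) := by
    refine (integrable_const (1:ℝ)).mono'
      (((hgm.comp measurable_fst).mul (hgm.comp measurable_snd)).stronglyMeasurable).aestronglyMeasurable ?_
    filter_upwards [hsupp2] with p hp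
    rw [Real.norm_eq_abs, abs_mul]
    have b1 : |g ρ p.1| ≤ 1 := by
      rw [abs_of_nonneg (g_nonneg hρ (by linarith [hp.1.1]) hp.1.2)]
      exact g_le_one hρ hp.1.1 hp.1.2
    have b2 : |g ρ p.2| ≤ 1 := by
      rw [abs_of_nonneg (g_nonneg hρ (by linarith [hp.2.1]) hp.2.2)]
      exact g_le_one hρ hp.2.1 hp.2.2
    calc |g ρ p.1| * |g ρ p.2| ≤ 1 * 1 := mul_le_mul b1 b2 (abs_nonneg _) zero_le_one
      _ = 1 := by norm_num
  have hmono : ∫ p : ℝ × ℝ, g ρ (p.1*p.2) * h ρ p.1 p.2 ∂(ν.prod ν)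
      ≤ ∫ p : ℝ × ℝ, g ρ p.1 * g ρ p.2 ∂(ν.prod ν) := by
    refine integral_mono_ae IgAB Igg ?_
    filter_upwards [hsupp2] with p hp
    exact pointwise_main hρ hp.1 hp.2
  have hprodmul : ∫ p : ℝ × ℝ, g ρ p.1 * g ρ p.2 ∂(ν.prod ν)
      = (∫ x, g ρ x ∂ν) * (∫ x, g ρ x ∂ν) :=
    MeasureTheory.integral_prod_mul (μ := ν) (ν := ν) (f := g ρ) (g := g ρ)
  -- transfer the four integrals
  have e1 : ∫ ω, g ρ (Z1 ω) ∂μ = ∫ x, g ρ x ∂ν := by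
    rw [hν, integral_map hm1.aemeasurable hgm.aestronglyMeasurable]
  have e2 : ∫ ω, g ρ (Z2 ω) ∂μ = ∫ x, g ρ x ∂ν := by
    rw [← hmapZ2, integral_map hm2.aemeasurable hgm.aestronglyMeasurable]
  have e3 : ∫ ω, g ρ (Z1 ω * Z2 ω) ∂μ = ∫ p : ℝ × ℝ, g ρ (p.1*p.2) ∂(ν.prod ν) := by
    rw [← hprod]
    exact (integral_map hpairm.aemeasurable hmA.aestronglyMeasurable).symm
  have e4 : ∫ ω, h ρ (Z1 ω) (Z2 ω) ∂μ = ∫ p : ℝ × ℝ, h ρ p.1 p.2 ∂(ν.prod ν) := by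
    rw [← hprod]
    exact (integral_map hpairm.aemeasurable hmB.aestronglyMeasurable).symm
  rw [ge_iff_le, e1, e2, e3, e4, ← hprodmul]
  calc (∫ p : ℝ × ℝ, g ρ (p.1*p.2) ∂(ν.prod ν)) * (∫ p : ℝ × ℝ, h ρ p.1 p.2 ∂(ν.prod ν))
      ≤ ∫ p : ℝ × ℝ, g ρ (p.1*p.2) * h ρ p.1 p.2 ∂(ν.prod ν) := hfkg
    _ ≤ ∫ p : ℝ × ℝ, g ρ p.1 * g ρ p.2 ∂(ν.prod ν) := hmono

end main
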